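/- (Isserlis/Wick formula for four variables) If (N₁, N₂, N₃, N₄) is a centered Gaussian vector, then E[N₁N₂N₃N₄] = E[N₁N₂]E[N₃N₄] + E[N₁N₃]E[N₂N₄] + E[N₁N₄]E[N₂N₃]. -/

import Mathlib

open MeasureTheory ProbabilityTheory Finset

section WickHelpers

open Real Set
open scoped NNReal ENNReal

lemma even_moment_gauss {b : ℝ} (hb : 0 < b) (k : ℕ) :
    ∫ x : ℝ, x ^ (2*k) * rexp (-b * x^2)
      = 2 * (b ^ (-(2*(k:ℝ)+1)/2) * (1/2) * Gamma ((2*(k:ℝ)+1)/2)) := by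
  have h1 : (∫ x : ℝ, x ^ (2*k) * rexp (-b * x^2))
      = ∫ x : ℝ, (fun t : ℝ => t ^ (2*k) * rexp (-b * t^2)) |x| := by
    congr 1; ext x
    simp [pow_mul, sq_abs]
  rw [h1, integral_comp_abs (f := fun t : ℝ => t ^ (2*k) * rexp (-b * t^2))]
  have h2 : (∫ x in Ioi (0:ℝ), x ^ (2*k) * rexp (-b * x^2))
      = ∫ x in Ioi (0:ℝ), x ^ ((2*(k:ℝ))) * rexp (-b * x ^ (2:ℝ)) := by
    refine setIntegral_congr_fun measurableSet_Ioi (fun x hx => ?_)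
    rw [show (2*(k:ℝ)) = ((2*k : ℕ) : ℝ) by push_cast; ring, rpow_natCast,
      show (2:ℝ) = ((2:ℕ):ℝ) by norm_num, rpow_natCast]
  rw [h2, integral_rpow_mul_exp_neg_mul_rpow two_pos (by have : (0:ℝ) ≤ (k:ℝ) := Nat.cast_nonneg k; linarith) hb]

lemma gaussianReal_integral_eq {v : ℝ≥0} (hv : v ≠ 0) (f : ℝ → ℝ) :
    ∫ x, f x ∂(gaussianReal 0 v) = ∫ x, gaussianPDFReal 0 v x * f x := by
  rw [gaussianReal_of_var_ne_zero 0 hv]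
  have : (gaussianPDF 0 v) = fun x => ((gaussianPDFReal 0 v x).toNNReal : ℝ≥0∞) := rfl
  rw [this, integral_withDensity_eq_integral_smul
    ((measurable_gaussianPDFReal 0 v).real_toNNReal) f]
  congr 1; ext x
  simp [NNReal.smul_def, Real.coe_toNNReal _ (gaussianPDFReal_nonneg 0 v x)]

lemma gaussianPDFReal_zero_mean (v : ℝ≥0) (x : ℝ) :
    gaussianPDFReal 0 v x = (√(2 * π * v))⁻¹ * rexp (-(2*(v:ℝ))⁻¹ * x^2) := by
  rw [gaussianPDFReal]
  congr 1
  · congr 1; ring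

lemma Gamma_three_halves : Gamma (3/2 : ℝ) = √π / 2 := by
  have h := Real.Gamma_add_one (by norm_num : (1/2 : ℝ) ≠ 0)
  rw [show (3/2 : ℝ) = 1/2 + 1 by norm_num, h, Real.Gamma_one_half_eq]
  ring

lemma Gamma_five_halves : Gamma (5/2 : ℝ) = 3 * √π / 4 := by
  have h := Real.Gamma_add_one (by norm_num : (3/2 : ℝ) ≠ 0)
  rw [show (5/2 : ℝ) = 3/2 + 1 by norm_num, h, Gamma_three_halves]
  ring

lemma rpow_inv_neg {a : ℝ} (ha : 0 < a) (y : ℝ) : (a⁻¹) ^ (-y) = a ^ y := by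
  rw [Real.inv_rpow ha.le, Real.rpow_neg ha.le, inv_inv]

lemma rpow_three_halves {a : ℝ} (ha : 0 < a) : a ^ ((3:ℝ)/2) = a * √a := by
  rw [show (3:ℝ)/2 = 1 + 1/2 by norm_num, Real.rpow_add ha, Real.rpow_one,
    ← Real.sqrt_eq_rpow]

lemma rpow_five_halves {a : ℝ} (ha : 0 < a) : a ^ ((5:ℝ)/2) = a^2 * √a := by
  rw [show (5:ℝ)/2 = 2 + 1/2 by norm_num, Real.rpow_add ha, ← Real.sqrt_eq_rpow,
    show (2:ℝ) = ((2:ℕ):ℝ) by norm_num, Real.rpow_natCast]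

lemma sqrt_two_pi_v {v : ℝ≥0} : √(2 * π * (v:ℝ)) = √(2*(v:ℝ)) * √π := by
  rw [show 2 * π * (v:ℝ) = (2*(v:ℝ)) * π by ring, Real.sqrt_mul (by positivity)]

lemma integral_pow_two_gaussianReal (v : ℝ≥0) :
    ∫ x, x^2 ∂(gaussianReal 0 v) = v := by
  by_cases hv : v = 0
  · simp [hv, gaussianReal_zero_var, integral_dirac]
  have hvpos : (0:ℝ) < (v:ℝ) := by
    exact_mod_cast lt_of_le_of_ne (zero_le : (0:ℝ≥0) ≤ v) (Ne.symm hv)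
  have hb : (0:ℝ) < (2*(v:ℝ))⁻¹ := by positivity
  have h2v : (0:ℝ) < 2*(v:ℝ) := by positivity
  rw [gaussianReal_integral_eq hv]
  simp_rw [gaussianPDFReal_zero_mean]
  have : (∫ x, (√(2 * π * (v:ℝ)))⁻¹ * rexp (-(2*(v:ℝ))⁻¹ * x^2) * x^2)
      = (√(2 * π * (v:ℝ)))⁻¹ * ∫ x, x^(2*1) * rexp (-(2*(v:ℝ))⁻¹ * x^2) := by
    rw [← integral_const_mul]
    congr 1; ext x; ring
  rw [this, even_moment_gauss hb 1]
  have hsπ : (0:ℝ) < √π := Real.sqrt_pos.mpr pi_pos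
  have hs2v : (0:ℝ) < √(2*(v:ℝ)) := Real.sqrt_pos.mpr h2v
  have hss : √(2*(v:ℝ)) * √(2*(v:ℝ)) = 2*(v:ℝ) := Real.mul_self_sqrt h2v.le
  rw [show (-(2*((1:ℕ):ℝ)+1)/2) = -((3:ℝ)/2) by norm_num,
    show ((2*((1:ℕ):ℝ)+1)/2) = (3:ℝ)/2 by norm_num,
    rpow_inv_neg h2v, rpow_three_halves h2v, Gamma_three_halves, sqrt_two_pi_v]
  field_simp

lemma integral_pow_four_gaussianReal (v : ℝ≥0) :
    ∫ x, x^4 ∂(gaussianReal 0 v) = 3 * (v:ℝ)^2 := by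
  by_cases hv : v = 0
  · simp [hv, gaussianReal_zero_var, integral_dirac]
  have hvpos : (0:ℝ) < (v:ℝ) := by
    exact_mod_cast lt_of_le_of_ne (zero_le : (0:ℝ≥0) ≤ v) (Ne.symm hv)
  have hb : (0:ℝ) < (2*(v:ℝ))⁻¹ := by positivity
  have h2v : (0:ℝ) < 2*(v:ℝ) := by positivity
  rw [gaussianReal_integral_eq hv]
  simp_rw [gaussianPDFReal_zero_mean]
  have : (∫ x, (√(2 * π * (v:ℝ)))⁻¹ * rexp (-(2*(v:ℝ))⁻¹ * x^2) * x^4)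
      = (√(2 * π * (v:ℝ)))⁻¹ * ∫ x, x^(2*2) * rexp (-(2*(v:ℝ))⁻¹ * x^2) := by
    rw [← integral_const_mul]
    congr 1; ext x; ring
  rw [this, even_moment_gauss hb 2]
  have hsπ : (0:ℝ) < √π := Real.sqrt_pos.mpr pi_pos
  have hs2v : (0:ℝ) < √(2*(v:ℝ)) := Real.sqrt_pos.mpr h2v
  have hss : √(2*(v:ℝ)) * √(2*(v:ℝ)) = 2*(v:ℝ) := Real.mul_self_sqrt h2v.le
  rw [show (-(2*((2:ℕ):ℝ)+1)/2) = -((5:ℝ)/2) by norm_num,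
    show ((2*((2:ℕ):ℝ)+1)/2) = (5:ℝ)/2 by norm_num,
    rpow_inv_neg h2v, rpow_five_halves h2v, Gamma_five_halves, sqrt_two_pi_v]
  field_simp
  ring_nf

lemma integrable_pow_four_gaussianReal (v : ℝ≥0) :
    Integrable (fun x : ℝ => x^4) (gaussianReal 0 v) := by
  by_cases hv : v = 0
  · simp only [hv, gaussianReal_zero_var]
    refine (integrable_const (((0:ℝ))^4)).congr ?_
    rw [Filter.EventuallyEq, ae_dirac_eq]
    simp
  have hvpos : (0:ℝ) < (v:ℝ) := by
    exact_mod_cast lt_of_le_of_ne (zero_le : (0:ℝ≥0) ≤ v) (Ne.symm hv)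
  have hb : (0:ℝ) < (2*(v:ℝ))⁻¹ := by positivity
  rw [gaussianReal_of_var_ne_zero 0 hv]
  rw [gaussianPDF_def]
  rw [integrable_withDensity_iff (measurable_gaussianPDFReal 0 v).ennreal_ofReal
    (ae_of_all _ fun x => ENNReal.ofReal_lt_top)]
  have hi : Integrable (fun x : ℝ => x ^ (4:ℝ) * rexp (-(2*(v:ℝ))⁻¹ * x^2)) :=
    integrable_rpow_mul_exp_neg_mul_sq hb (by norm_num)
  have hi' : Integrable (fun x : ℝ => (√(2 * π * (v:ℝ)))⁻¹ * (x ^ (4:ℕ) * rexp (-(2*(v:ℝ))⁻¹ * x^2))) := by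
    refine Integrable.const_mul ?_ _
    have : (fun x : ℝ => x ^ (4:ℕ) * rexp (-(2*(v:ℝ))⁻¹ * x^2))
        = fun x : ℝ => x ^ ((4:ℕ):ℝ) * rexp (-(2*(v:ℝ))⁻¹ * x^2) := by
      ext x; rw [Real.rpow_natCast]
    rw [this]
    exact_mod_cast hi
  refine hi'.congr (ae_of_all _ fun x => ?_)
  simp only [gaussianPDFReal_zero_mean]
  have h₀ : (0:ℝ) ≤ (√(2 * π * (v:ℝ)))⁻¹ * rexp (-(2*(v:ℝ))⁻¹ * x^2) := by positivity
  rw [ENNReal.toReal_ofReal h₀]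
  ring

open Finset

lemma amgm4 (a b c d : ℝ) : ‖a*b*c*d‖ ≤ (a^4+b^4+c^4+d^4)/4 := by
  rw [show a*b*c*d = (a*b)*(c*d) by ring, Real.norm_eq_abs, abs_mul]
  nlinarith [sq_nonneg (|a*b| - |c*d|), sq_abs (a*b), sq_abs (c*d),
    abs_nonneg (a*b), abs_nonneg (c*d), sq_nonneg (a^2-b^2), sq_nonneg (c^2-d^2),
    sq_nonneg (a*b), sq_nonneg (c*d)]

lemma amgm2 (a b : ℝ) : ‖a*b‖ ≤ (a^4+b^4+2)/4 := by
  rw [Real.norm_eq_abs, abs_mul]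
  nlinarith [sq_nonneg (|a| - |b|), sq_abs a, sq_abs b, abs_nonneg a, abs_nonneg b,
    sq_nonneg (a^2-1), sq_nonneg (b^2-1), sq_nonneg (a^2-b^2)]


end WickHelpers

set_option maxHeartbeats 4000000 in
/-- Isserlis/Wick formula for four variables: if `(N₀, N₁, N₂, N₃)` is a centered
Gaussian vector (every linear combination is a centered real Gaussian), then
`E[N₀N₁N₂N₃] = E[N₀N₁]E[N₂N₃] + E[N₀N₂]E[N₁N₃] + E[N₀N₃]E[N₁N₂]`. -/
theorem stmt1 {Ω : Type} [MeasureSpace Ω] [IsProbabilityMeasure (ℙ : Measure Ω)]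
    (N : Fin 4 → Ω → ℝ) (hmeas : ∀ i, Measurable (N i))
    (hgauss : ∀ c : Fin 4 → ℝ, ∃ v : NNReal,
      Measure.map (fun ω => ∑ i, c i * N i ω) (ℙ : Measure Ω) = gaussianReal 0 v) :
    ∫ ω, N 0 ω * N 1 ω * N 2 ω * N 3 ω ∂(ℙ : Measure Ω)
      = (∫ ω, N 0 ω * N 1 ω ∂(ℙ : Measure Ω)) * (∫ ω, N 2 ω * N 3 ω ∂(ℙ : Measure Ω))
        + (∫ ω, N 0 ω * N 2 ω ∂(ℙ : Measure Ω)) * (∫ ω, N 1 ω * N 3 ω ∂(ℙ : Measure Ω))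
        + (∫ ω, N 0 ω * N 3 ω ∂(ℙ : Measure Ω)) * (∫ ω, N 1 ω * N 2 ω ∂(ℙ : Measure Ω)) := by
  have hSmeas : ∀ t : Fin 4 → ℝ, Measurable (fun ω => ∑ i, t i * N i ω) := fun t =>
    Finset.measurable_sum _ fun i _ => (hmeas i).const_mul _
  have key : ∀ t : Fin 4 → ℝ,
      ∫ ω, (∑ i, t i * N i ω)^4 ∂(ℙ : Measure Ω)
        = 3 * (∫ ω, (∑ i, t i * N i ω)^2 ∂(ℙ : Measure Ω))^2 := by
    intro t
    obtain ⟨v, hv⟩ := hgauss t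
    have h4 : ∫ ω, (∑ i, t i * N i ω)^4 ∂(ℙ : Measure Ω) = ∫ x, x^4 ∂(gaussianReal 0 v) := by
      rw [← hv, integral_map (hSmeas t).aemeasurable (by fun_prop)]
    have h2 : ∫ ω, (∑ i, t i * N i ω)^2 ∂(ℙ : Measure Ω) = ∫ x, x^2 ∂(gaussianReal 0 v) := by
      rw [← hv, integral_map (hSmeas t).aemeasurable (by fun_prop)]
    rw [h4, h2, integral_pow_two_gaussianReal, integral_pow_four_gaussianReal]
  have hN4 : ∀ i, Integrable (fun ω => N i ω ^ 4) (ℙ : Measure Ω) := by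
    intro i
    obtain ⟨v, hv⟩ := hgauss (fun j => if j = i then 1 else 0)
    have hfun : (fun ω => ∑ j, (if j = i then (1:ℝ) else 0) * N j ω) = N i := by
      ext ω; simp [ite_mul]
    rw [hfun] at hv
    have h1 : Integrable (fun x : ℝ => x^4) (Measure.map (N i) (ℙ : Measure Ω)) :=
      hv ▸ integrable_pow_four_gaussianReal v
    exact (integrable_map_measure (by fun_prop) (hmeas i).aemeasurable).mp h1
  have hP4 : ∀ i j k l, Integrable (fun ω => N i ω * N j ω * N k ω * N l ω) (ℙ : Measure Ω) := by
    intro i j k l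
    refine Integrable.mono'
      (g := fun ω => ((N i ω)^4 + (N j ω)^4 + (N k ω)^4 + (N l ω)^4)/4)
      ((((hN4 i).add (hN4 j)).add ((hN4 k).add (hN4 l))).div_const 4 |>.congr
        (ae_of_all _ fun ω => by simp only [Pi.add_apply]; try ring))
      ((((hmeas i).mul (hmeas j)).mul (hmeas k)).mul (hmeas l)).aestronglyMeasurable
      (ae_of_all _ fun ω => amgm4 _ _ _ _)
  have hP2 : ∀ i j, Integrable (fun ω => N i ω * N j ω) (ℙ : Measure Ω) := by
    intro i j
    refine Integrable.mono'
      (g := fun ω => ((N i ω)^4 + (N j ω)^4 + 2)/4)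
      ((((hN4 i).add (hN4 j)).add (integrable_const 2)).div_const 4 |>.congr
        (ae_of_all _ fun ω => by simp only [Pi.add_apply]; try ring))
      ((hmeas i).mul (hmeas j)).aestronglyMeasurable
      (ae_of_all _ fun ω => amgm2 _ _)
  have exp4 : ∀ t : Fin 4 → ℝ,
      ∫ ω, (∑ i, t i * N i ω)^4 ∂(ℙ : Measure Ω)
      = ∑ i, ∑ j, ∑ k, ∑ l, (t i * t j * t k * t l)
          * ∫ ω, N i ω * N j ω * N k ω * N l ω ∂(ℙ : Measure Ω) := by
    intro t
    have hpt : ∀ ω : Ω, (∑ i, t i * N i ω)^4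
        = ∑ i, ∑ j, ∑ k, ∑ l, (t i * t j * t k * t l) * (N i ω * N j ω * N k ω * N l ω) := by
      intro ω; simp only [Fin.sum_univ_four]; ring
    simp_rw [hpt]
    rw [integral_finset_sum _ (fun i _ => integrable_finset_sum _ (fun j _ =>
      integrable_finset_sum _ (fun k _ => integrable_finset_sum _ (fun l _ =>
      (hP4 i j k l).const_mul _))))]
    refine Finset.sum_congr rfl fun i _ => ?_
    rw [integral_finset_sum _ (fun j _ => integrable_finset_sum _ (fun k _ =>
      integrable_finset_sum _ (fun l _ => (hP4 i j k l).const_mul _)))]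
    refine Finset.sum_congr rfl fun j _ => ?_
    rw [integral_finset_sum _ (fun k _ => integrable_finset_sum _ (fun l _ =>
      (hP4 i j k l).const_mul _))]
    refine Finset.sum_congr rfl fun k _ => ?_
    rw [integral_finset_sum _ (fun l _ => (hP4 i j k l).const_mul _)]
    exact Finset.sum_congr rfl fun l _ => integral_const_mul _ _
  have exp2 : ∀ t : Fin 4 → ℝ,
      ∫ ω, (∑ i, t i * N i ω)^2 ∂(ℙ : Measure Ω)
      = ∑ i, ∑ j, (t i * t j) * ∫ ω, N i ω * N j ω ∂(ℙ : Measure Ω) := by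
    intro t
    have hpt : ∀ ω : Ω, (∑ i, t i * N i ω)^2
        = ∑ i, ∑ j, (t i * t j) * (N i ω * N j ω) := by
      intro ω; simp only [Fin.sum_univ_four]; ring
    simp_rw [hpt]
    rw [integral_finset_sum _ (fun i _ => integrable_finset_sum _ (fun j _ =>
      (hP2 i j).const_mul _))]
    refine Finset.sum_congr rfl fun i _ => ?_
    rw [integral_finset_sum _ (fun j _ => (hP2 i j).const_mul _)]
    exact Finset.sum_congr rfl fun j _ => integral_const_mul _ _
  have master : ∀ t : Fin 4 → ℝ,
      ∑ i, ∑ j, ∑ k, ∑ l, (t i * t j * t k * t l)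
          * ∫ ω, N i ω * N j ω * N k ω * N l ω ∂(ℙ : Measure Ω)
      = 3 * (∑ i, ∑ j, (t i * t j) * ∫ ω, N i ω * N j ω ∂(ℙ : Measure Ω))^2 := by
    intro t
    rw [← exp4 t, ← exp2 t]
    exact key t
  have h1234 := master ![1,1,1,1]
  have h123 := master ![1,1,1,0]
  have h124 := master ![1,1,0,1]
  have h134 := master ![1,0,1,1]
  have h234 := master ![0,1,1,1]
  have h12 := master ![1,1,0,0]
  have h13 := master ![1,0,1,0]
  have h14 := master ![1,0,0,1]
  have h23 := master ![0,1,1,0]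
  have h24 := master ![0,1,0,1]
  have h34 := master ![0,0,1,1]
  have h1 := master ![1,0,0,0]
  have h2 := master ![0,1,0,0]
  have h3 := master ![0,0,1,0]
  have h4 := master ![0,0,0,1]
  simp only [Fin.sum_univ_four, Matrix.cons_val_zero, Matrix.cons_val_one, Matrix.head_cons,
    Matrix.cons_val_two, Matrix.tail_cons, Matrix.cons_val_three, Matrix.head_fin_const,
    one_mul, mul_one, zero_mul, mul_zero, add_zero, zero_add]
    at h1234 h123 h124 h134 h234 h12 h13 h14 h23 h24 h34 h1 h2 h3 h4
  simp only [mul_comm, mul_left_comm, mul_assoc]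
    at h1234 h123 h124 h134 h234 h12 h13 h14 h23 h24 h34 h1 h2 h3 h4 ⊢
  linear_combination (1/24) * (h1234 - h123 - h124 - h134 - h234
    + h12 + h13 + h14 + h23 + h24 + h34 - h1 - h2 - h3 - h4)
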